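/- Let G be an isometric daisy graph of a Hamming graph H = H_{k_1,…,k_n} with respect to 0^n, where H is the smallest possible such Hamming graph. Then every △-class of G is peripheral: if the △-class F contains the edge 0^n e^j_l for some 0 < l ≤ k_j − 1, then for every l' ∈ {1,…,k_j−1}, every vertex of W_{l'}^j has a neighbor in W_0^j (i.e., U_{l'}^j = W_{l'}^j). -/

import Mathlib

open SimpleGraph

namespace Daisy

variable {V : Type*}

/-- The interval `I_G(u,v)`: vertices lying on shortest `u,v`-paths. -/
def interval (G : SimpleGraph V) (u v : V) : Set V :=
  {x | G.dist u x + G.dist x v = G.dist u v}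

/-- The vertex set of the daisy graph of `G` with respect to the root `r`, generated by `X`. -/
def daisySet (G : SimpleGraph V) (r : V) (X : Set V) : Set V :=
  ⋃ v ∈ X, interval G r v

/-- The subgraph of `G` induced by `S` is an isometric subgraph of `G`. -/
def IsIsometricSubset (G : SimpleGraph V) (S : Set V) : Prop :=
  ∀ u v : S, (G.induce S).dist u v = G.dist u.1 v.1

/-- Some shortest `u,v`-path of `G` contains both `x` and `y`. -/
def OnShortestPath (G : SimpleGraph V) (u v x y : V) : Prop :=
  ∃ p : G.Walk u v, p.length = G.dist u v ∧ x ∈ p.support ∧ y ∈ p.support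

/-- Conditions 1 and 2 of the definition of a pseudo-median `(x,y,z)` of the triple `(u,v,w)`. -/
def PseudoMedianConds (G : SimpleGraph V) (u v w x y z : V) : Prop :=
  OnShortestPath G u v x y ∧ OnShortestPath G v w y z ∧ OnShortestPath G u w x z ∧
  G.dist x y = G.dist y z ∧ G.dist y z = G.dist x z

/-- `(x,y,z)` is a pseudo-median of the triple `(u,v,w)` in `G`:
it satisfies the path and equidistance conditions, and `d(x,y)` is minimal under them. -/
def IsPseudoMedian (G : SimpleGraph V) (u v w x y z : V) : Prop :=
  PseudoMedianConds G u v w x y z ∧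
  ∀ x' y' z' : V, PseudoMedianConds G u v w x' y' z' → G.dist x y ≤ G.dist x' y'

/-- The triple `(u,v,w)` has a pseudo-median of size `s` in `G`. -/
def HasPseudoMedianOfSize (G : SimpleGraph V) (u v w : V) (s : ℕ) : Prop :=
  ∃ x y z : V, IsPseudoMedian G u v w x y z ∧ G.dist x y = s

/-- The Hamming graph with factors `K_{k i}`: vertices are tuples, two vertices being
adjacent iff they differ in exactly one coordinate. -/
def hammingGraph {ι : Type*} (k : ι → ℕ) : SimpleGraph (∀ i, Fin (k i)) where
  Adj u v := ∃! i, u i ≠ v i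
  symm := by
    constructor
    rintro u v ⟨i, hi, hu⟩
    exact ⟨i, Ne.symm hi, fun j hj => hu j (Ne.symm hj)⟩
  loopless := by
    constructor
    rintro u ⟨i, hi, -⟩
    exact hi rfl

/-- The all-zeros vertex `0^n` of a Hamming graph. -/
def hroot {ι : Type*} (k : ι → ℕ) (hk : ∀ i, 0 < k i) : ∀ i, Fin (k i) :=
  fun i => ⟨0, hk i⟩

/-- `S` is the vertex set of a daisy graph of `G` with respect to the root `r`. -/
def IsDaisySet (G : SimpleGraph V) (r : V) (S : Set V) : Prop :=
  ∃ X : Set V, S = daisySet G r X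

/-- `G` is (isomorphic to) an isometric daisy graph of `H` with respect to the root `r`. -/
def IsIsometricDaisyGraphOf {U : Type*} (G : SimpleGraph U) (H : SimpleGraph V) (r : V) : Prop :=
  ∃ S : Set V, IsDaisySet H r S ∧ IsIsometricSubset H S ∧ Nonempty (G ≃g H.induce S)

/-- `G` is not an isometric daisy graph (w.r.t. the all-zeros root) of any Hamming graph
with fewer vertices than `hammingGraph k`. -/
def SmallestSuch {U : Type*} (G : SimpleGraph U) {n : ℕ} (k : Fin n → ℕ) : Prop :=
  ∀ (m : ℕ) (k' : Fin m → ℕ) (hk' : ∀ i, 0 < k' i),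
    Fintype.card (∀ i, Fin (k' i)) < Fintype.card (∀ i, Fin (k i)) →
    ¬ IsIsometricDaisyGraphOf G (hammingGraph k') (hroot k' hk')

/-- The Djoković relation `~` on (ordered) edges: `(u,v) ~ (x,y)` iff both are edges,
`x ∈ W_{uv} = {z | d(u,z) < d(v,z)}` and `y ∈ W_{vu}`. -/
def sim (G : SimpleGraph V) (p q : V × V) : Prop :=
  G.Adj p.1 p.2 ∧ G.Adj q.1 q.2 ∧
  G.dist p.1 q.1 < G.dist p.2 q.1 ∧ G.dist p.2 q.2 < G.dist p.1 q.2

/-- Brešar's relation `△` on edges: `uv △ xy` iff `uv ~ xy` or there is a clique containing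
edges `e`, `f` with `xy ~ e` and `uv ~ f`. -/
def tri (G : SimpleGraph V) (p q : V × V) : Prop :=
  sim G p q ∨ ∃ (T : Set V) (e f : V × V),
    G.IsClique T ∧ e.1 ∈ T ∧ e.2 ∈ T ∧ f.1 ∈ T ∧ f.2 ∈ T ∧ sim G q e ∧ sim G p f

/-- The `△`-class of the edge `p`: the class of `p` under the equivalence relation
generated by `△` (in partial Hamming graphs `△` is itself an equivalence relation). -/
def triClass (G : SimpleGraph V) (p : V × V) : Set (V × V) :=
  {q | Relation.EqvGen (tri G) p q}

section Aux

variable {ι : Type*} [Fintype ι] {k : ι → ℕ}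

open Finset in
lemma adj_hammingDist {u v : ∀ i, Fin (k i)} (h : (hammingGraph k).Adj u v) :
    hammingDist u v = 1 := by
  classical
  obtain ⟨i, hi, hu⟩ := h
  rw [hammingDist, Finset.card_eq_one]
  refine ⟨i, ?_⟩
  ext j
  simp only [Finset.mem_filter, Finset.mem_univ, true_and, Finset.mem_singleton]
  exact ⟨fun hj => hu j hj, fun hj => hj ▸ hi⟩

lemma exists_walk_hamming (u v : ∀ i, Fin (k i)) :
    ∃ p : (hammingGraph k).Walk u v, p.length = hammingDist u v := by
  classical
  generalize hd : hammingDist u v = d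
  induction d generalizing u with
  | zero =>
    obtain rfl : u = v := hammingDist_eq_zero.mp hd
    exact ⟨SimpleGraph.Walk.nil, rfl⟩
  | succ d ih =>
    have hne : u ≠ v := by
      intro h; subst h; simp [hammingDist_self] at hd
    obtain ⟨i, hi⟩ := Function.ne_iff.mp hne
    set u' := Function.update u i (v i) with hu'
    have hadj : (hammingGraph k).Adj u u' := by
      refine ⟨i, ?_, fun j hj => ?_⟩
      · simpa [hu', Function.update_self] using hi
      · by_contra hne'
        exact hj (by simp [hu', Function.update_of_ne hne'])
    have hd' : hammingDist u' v = d := by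
      have hset : (Finset.univ.filter (fun j => u' j ≠ v j)) =
          (Finset.univ.filter (fun j => u j ≠ v j)).erase i := by
        ext j
        simp only [Finset.mem_filter, Finset.mem_univ, true_and, Finset.mem_erase]
        constructor
        · intro hj
          have hji : j ≠ i := by
            intro h; subst h; exact hj (by simp [hu', Function.update_self])
          exact ⟨hji, by simpa [hu', Function.update_of_ne hji] using hj⟩
        · rintro ⟨hji, hj⟩
          simpa [hu', Function.update_of_ne hji] using hj
      have hmem : i ∈ Finset.univ.filter (fun j => u j ≠ v j) := by
        simp [hi]
      have hce := Finset.card_erase_of_mem hmem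
      unfold hammingDist at hd ⊢
      rw [hset, hce, hd]
      omega
    obtain ⟨p, hp⟩ := ih u' hd'
    exact ⟨SimpleGraph.Walk.cons hadj p, by simp [hp]⟩

lemma hammingDist_le_walk_length {u v : ∀ i, Fin (k i)} (p : (hammingGraph k).Walk u v) :
    hammingDist u v ≤ p.length := by
  induction p with
  | nil => simp
  | @cons a b c h p ih =>
    calc hammingDist a c ≤ hammingDist a b + hammingDist b c := hammingDist_triangle a b c
    _ ≤ 1 + p.length := by
        have := adj_hammingDist h; omega
    _ = (SimpleGraph.Walk.cons h p).length := by simp [Nat.add_comm]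

lemma hamming_dist_eq (u v : ∀ i, Fin (k i)) :
    (hammingGraph k).dist u v = hammingDist u v := by
  obtain ⟨p, hp⟩ := exists_walk_hamming u v
  refine le_antisymm (hp ▸ SimpleGraph.dist_le p) ?_
  have hr : (hammingGraph k).Reachable u v := ⟨p⟩
  obtain ⟨q, hq⟩ := hr.exists_walk_length_eq_dist
  rw [← hq]
  exact hammingDist_le_walk_length q

lemma mem_interval_iff (u v z : ∀ i, Fin (k i)) :
    z ∈ interval (hammingGraph k) u v ↔ ∀ i, z i = u i ∨ z i = v i := by
  classical
  have hform : ∀ a b : ∀ i, Fin (k i),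
      hammingDist a b = ∑ i, (if a i ≠ b i then 1 else 0) := by
    intro a b
    rw [hammingDist, Finset.card_filter]
  have key : z ∈ interval (hammingGraph k) u v ↔
      (∑ i, (((if u i ≠ z i then 1 else 0) + (if z i ≠ v i then 1 else 0)) : ℕ)) =
      (∑ i, ((if u i ≠ v i then 1 else 0) : ℕ)) := by
    simp only [interval, Set.mem_setOf_eq, hamming_dist_eq, hform]
    rw [← Finset.sum_add_distrib]
  rw [key, eq_comm, Finset.sum_eq_sum_iff_of_le (fun i _ => ?ple)]
  case ple =>
    split_ifs <;> simp_all
  constructor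
  · intro h i
    have := h i (Finset.mem_univ i)
    by_cases h1 : u i = z i
    · exact Or.inl h1.symm
    · by_cases h2 : z i = v i
      · exact Or.inr h2
      · simp [h1, h2] at this
        rcases eq_or_ne (u i) (v i) with h3 | h3 <;> simp [h3] at this
  · intro h i _
    rcases h i with h1 | h1
    · by_cases h2 : z i = v i <;> simp [h1, h2]
    · by_cases h2 : u i = z i
      · simp [h1, h2, ← h2]
      · have h3 : u i ≠ v i := fun he => h2 (he.trans h1.symm)
        simp [h1, h2, h3]

end Aux

/-- Let `G` (with vertex set `S`) be an isometric daisy graph of a Hamming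
graph w.r.t. `0^n`, smallest possible. Every `△`-class of `G` is peripheral: if the edge
`0^n e^j_l` (for some `0 < l ≤ k j - 1`) is an edge of `G`, then for every `l' ≠ 0` every
vertex of `W_{l'}^j` has a neighbour in `W_0^j`, i.e. `U_{l'}^j = W_{l'}^j`. -/
theorem triClass_peripheral
    (n : ℕ) (k : Fin n → ℕ) (hk : ∀ i, 0 < k i)
    (S : Set (∀ i, Fin (k i)))
    (hdaisy : IsDaisySet (hammingGraph k) (hroot k hk) S)
    (hisom : IsIsometricSubset (hammingGraph k) S)
    (hmin : SmallestSuch ((hammingGraph k).induce S) k)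
    (j : Fin n) (l : Fin (k j)) (hl : l ≠ ⟨0, hk j⟩)
    (h0 : hroot k hk ∈ S) (hel : Function.update (hroot k hk) j l ∈ S) :
    ∀ l' : Fin (k j), l' ≠ ⟨0, hk j⟩ →
      ∀ x ∈ S, x j = l' →
        ∃ y ∈ S, y j = ⟨0, hk j⟩ ∧ (hammingGraph k).Adj x y := by
  classical
  obtain ⟨X, hX⟩ := hdaisy
  intro l' hl' x hxS hxj
  refine ⟨Function.update x j ⟨0, hk j⟩, ?_, Function.update_self _ _ _, ?_⟩
  · rw [hX] at hxS ⊢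
    simp only [daisySet, Set.mem_iUnion] at hxS ⊢
    obtain ⟨v, hvX, hxv⟩ := hxS
    refine ⟨v, hvX, ?_⟩
    rw [mem_interval_iff] at hxv ⊢
    intro i
    rcases eq_or_ne i j with rfl | hij
    · left
      simp [Function.update_self, hroot]
    · rw [Function.update_of_ne hij]
      exact hxv i
  · refine ⟨j, ?_, fun i hi => ?_⟩
    · show x j ≠ Function.update x j ⟨0, hk j⟩ j
      rw [Function.update_self, hxj]
      exact hl'
    · by_contra hij
      exact hi (by rw [Function.update_of_ne hij])


end Daisy
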